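/- Fix ω > 0, θ ∈ (0,π/2), and t > 0 with ωt + θ ∈ (0, π/2). Define m := −(1/ω)cotθ, y := (1/ω)cosθ·csc(ωt+θ), z := m + (1/ω)cos²θ·(cotθ − cot(ωt+θ)). Then z − m > 0 and − y·m/(z − m) = 1/(ω·sin(ωt)). -/

import Mathlib

open Real

theorem eig_equal_q (omega theta t : ℝ) (homega : 0 < omega)
    (htheta : theta ∈ Set.Ioo (0 : ℝ) (π / 2)) (ht : 0 < t)
    (hsum : omega * t + theta ∈ Set.Ioo (0 : ℝ) (π / 2)) :
    let m := -(1 / omega) * Real.cot theta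
    let y := (1 / omega) * Real.cos theta / Real.sin (omega * t + theta)
    let z := m + (1 / omega) * Real.cos theta ^ 2 *
      (Real.cot theta - Real.cot (omega * t + theta))
    0 < z - m ∧ -(y * m) / (z - m) = 1 / (omega * Real.sin (omega * t)) := by
  intro m y z
  obtain ⟨hθ0, hθπ⟩ := htheta
  obtain ⟨hs0, hsπ⟩ := hsum
  have hpi := Real.pi_pos
  have hsθ : 0 < Real.sin theta :=
    Real.sin_pos_of_pos_of_lt_pi hθ0 (by linarith)
  have hcθ : 0 < Real.cos theta :=
    Real.cos_pos_of_mem_Ioo ⟨by linarith, hθπ⟩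
  have hss : 0 < Real.sin (omega * t + theta) :=
    Real.sin_pos_of_pos_of_lt_pi hs0 (by linarith)
  have hωt : 0 < Real.sin (omega * t) :=
    Real.sin_pos_of_pos_of_lt_pi (mul_pos homega ht) (by nlinarith)
  have key : Real.sin (omega * t) =
      Real.sin (omega * t + theta) * Real.cos theta -
        Real.cos (omega * t + theta) * Real.sin theta := by
    have := Real.sin_sub (omega * t + theta) theta
    simpa using this
  have hzm : z - m = (1 / omega) * Real.cos theta ^ 2 *
      (Real.sin (omega * t) / (Real.sin theta * Real.sin (omega * t + theta))) := by
    have hd : Real.cos theta / Real.sin theta -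
        Real.cos (omega * t + theta) / Real.sin (omega * t + theta) =
        Real.sin (omega * t) / (Real.sin theta * Real.sin (omega * t + theta)) := by
      rw [div_sub_div _ _ hsθ.ne' hss.ne', key]; ring_nf
    simp only [z, m, Real.cot_eq_cos_div_sin]
    rw [hd]; ring
  constructor
  · rw [hzm]
    positivity
  · rw [hzm]
    simp only [y, m, Real.cot_eq_cos_div_sin]
    field_simp
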